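/- arXiv:1911.01679 — 2 statements merged into one kernel-verified Lean document; each statement's English description precedes it below -/
import Mathlib

section
/- Let K be a compact convex set, h convex and β-smooth on K, x ∈ K, and y = argmin_{z∈K} ∇h(x)·z. Then for any α ∈ [0,1], h((1−α)x + αy) ≤ h(x) − α(h(x) − h(x*)) + (α²β/2)‖y − x‖², where x* is a minimizer of h on K. -/
open scoped RealInnerProductSpace
open Set

theorem descent (k : ℕ) (β : ℝ) (h : EuclideanSpace ℝ (Fin k) → ℝ)
    (gradh : EuclideanSpace ℝ (Fin k) → EuclideanSpace ℝ (Fin k))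
    (hgrad : ∀ x, HasGradientAt h (gradh x) x)
    (hsmooth : ∀ a b, ‖gradh a - gradh b‖ ≤ β * ‖a - b‖)
    (x d : EuclideanSpace ℝ (Fin k)) (α : ℝ) (hα : α ∈ Icc (0:ℝ) 1) :
    h (x + α • d) ≤ h x + α * ⟪gradh x, d⟫ + β * ‖d‖ ^ 2 * α ^ 2 / 2 := by
  set c : ℝ → EuclideanSpace ℝ (Fin k) := fun t => x + t • d with hc
  have hcder : ∀ t : ℝ, HasDerivAt c d t := by
    intro t
    simpa [hc] using ((hasDerivAt_id t).smul_const d).const_add x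
  have hder : ∀ t : ℝ, HasDerivAt (fun t => h (c t)) ⟪gradh (c t), d⟫ t := by
    intro t
    have := (hgrad (c t)).hasFDerivAt.comp_hasDerivAt t (hcder t)
    rw [InnerProductSpace.toDual_apply_apply] at this
    exact this
  set f : ℝ → ℝ := fun t => h (c t) - h x - t * ⟪gradh x, d⟫ with hf
  set B : ℝ → ℝ := fun t => β * ‖d‖ ^ 2 * t ^ 2 / 2 with hB
  have hfd : ∀ t : ℝ, HasDerivAt f (⟪gradh (c t), d⟫ - ⟪gradh x, d⟫) t := by
    intro t
    have h2 : HasDerivAt (fun t : ℝ => t * ⟪gradh x, d⟫) ⟪gradh x, d⟫ t := by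
      simpa using (hasDerivAt_id t).mul_const ⟪gradh x, d⟫
    exact ((hder t).sub_const (h x)).sub h2
  have hBd : ∀ t : ℝ, HasDerivAt B (β * ‖d‖ ^ 2 * t) t := by
    intro t
    have := ((hasDerivAt_pow 2 t).const_mul (β * ‖d‖ ^ 2)).div_const 2
    convert this using 1
    exacts [rfl, rfl, by norm_num; ring]
  have bound : ∀ t ∈ Ico (0:ℝ) 1, ⟪gradh (c t), d⟫ - ⟪gradh x, d⟫ ≤ β * ‖d‖ ^ 2 * t := by
    intro t ht
    rw [← inner_sub_left]
    calc ⟪gradh (c t) - gradh x, d⟫ ≤ ‖gradh (c t) - gradh x‖ * ‖d‖ :=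
          real_inner_le_norm _ _
      _ ≤ (β * ‖c t - x‖) * ‖d‖ :=
          mul_le_mul_of_nonneg_right (hsmooth _ _) (norm_nonneg _)
      _ = β * ‖d‖ ^ 2 * t := by
          have : c t - x = t • d := by simp [hc]
          rw [this, norm_smul]
          simp [abs_of_nonneg ht.1]
          ring
  have key : ∀ t ∈ Icc (0:ℝ) 1, f t ≤ B t :=
    fun t ht => image_le_of_deriv_right_le_deriv_boundary
      (fun s _ => (hfd s).continuousAt.continuousWithinAt)
      (fun s hs => (hfd s).hasDerivWithinAt)
      (by simp [hf, hB, hc])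
      (fun s _ => (hBd s).continuousAt.continuousWithinAt)
      (fun s hs => (hBd s).hasDerivWithinAt)
      bound ht
  have := key α hα
  simp only [hf, hB, hc] at this
  linarith

open scoped RealInnerProductSpace in
/-- per-iteration Frank–Wolfe descent lemma:
h((1−α)x + αy) ≤ h(x) − α(h(x) − h(x*)) + (α²β/2)‖y − x‖². -/
theorem stmt_4 (k : ℕ) (K : Set (EuclideanSpace ℝ (Fin k)))
    (hKc : IsCompact K) (hK : Convex ℝ K) (β : ℝ)
    (h : EuclideanSpace ℝ (Fin k) → ℝ)
    (gradh : EuclideanSpace ℝ (Fin k) → EuclideanSpace ℝ (Fin k))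
    (hgrad : ∀ x, HasGradientAt h (gradh x) x)
    (hconv : ∀ a b : EuclideanSpace ℝ (Fin k), h a + ⟪gradh a, b - a⟫ ≤ h b)
    (hsmooth : ∀ a b : EuclideanSpace ℝ (Fin k), ‖gradh a - gradh b‖ ≤ β * ‖a - b‖)
    (x : EuclideanSpace ℝ (Fin k)) (hx : x ∈ K)
    (y : EuclideanSpace ℝ (Fin k)) (hy : y ∈ K)
    (hyopt : ∀ z ∈ K, ⟪gradh x, y⟫ ≤ ⟪gradh x, z⟫)
    (xstar : EuclideanSpace ℝ (Fin k)) (hxstar : xstar ∈ K)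
    (hxstaropt : ∀ z ∈ K, h xstar ≤ h z) :
    ∀ α : ℝ, α ∈ Set.Icc (0 : ℝ) 1 →
      h ((1 - α) • x + α • y) ≤
        h x - α * (h x - h xstar) + α ^ 2 * β / 2 * ‖y - x‖ ^ 2 := by
  intro α hα
  have heq : (1 - α) • x + α • y = x + α • (y - x) := by
    rw [smul_sub, sub_smul, one_smul]
    abel
  rw [heq]
  have h1 := descent k β h gradh hgrad hsmooth x (y - x) α hα
  have h2 : ⟪gradh x, y - x⟫ ≤ h xstar - h x := by
    have := hconv x xstar
    have h3 : ⟪gradh x, y - x⟫ ≤ ⟪gradh x, xstar - x⟫ := by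
      rw [inner_sub_right, inner_sub_right]
      have := hyopt xstar hxstar
      linarith
    linarith
  have h4 : α * ⟪gradh x, y - x⟫ ≤ α * (h xstar - h x) :=
    mul_le_mul_of_nonneg_left h2 hα.1
  nlinarith [sq_nonneg (α * ‖y - x‖)]
end

section
/- Suppose a no-regret procedure produces w₁,…,w_T in W and policies π₁,…,π_T with π_t best response to w_t (i.e., w_t·Φ(π_t) = max_{π∈Π} w_t·Φ(π)), and the regret bound (1/T)Σ_t w_t·(Φ(π_t) − Φ_E) ≤ min_{w∈W} (1/T)Σ_t w·(Φ(π_t) − Φ_E) + R_T holds. Then the uniform mixture ψ with Φ(ψ) = (1/T)Σ_t Φ(π_t) satisfies min_{w∈W} w·(Φ(ψ) − Φ_E) ≥ f* − R_T, where f* = max_{ψ'∈Ψ} min_{w∈W} w·(Φ(ψ') − Φ_E). -/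
open scoped RealInnerProductSpace

/-- a no-regret reward player against best-response policies yields an
ε-optimal mixed policy: the uniform mixture ψ with Φ(ψ) = (1/T)Σ_t Φ(π_t) satisfies
min_{w∈W} w·(Φ(ψ) − Φ_E) ≥ f* − R_T. -/
theorem stmt_19 (k : ℕ) (P : Type) [Fintype P] [Nonempty P]
    (Φ : P → EuclideanSpace ℝ (Fin k)) (ΦE : EuclideanSpace ℝ (Fin k))
    (W : Set (EuclideanSpace ℝ (Fin k)))
    (hWne : W.Nonempty) (hWc : IsCompact W) (hW : Convex ℝ W)
    (T : ℕ) (hT : 0 < T)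
    (w : Fin T → EuclideanSpace ℝ (Fin k)) (hw : ∀ t, w t ∈ W)
    (π : Fin T → P)
    (hbest : ∀ t : Fin T, ∀ p : P, ⟪w t, Φ p⟫ ≤ ⟪w t, Φ (π t)⟫)
    (R : ℝ)
    (hregret : (1 / (T : ℝ)) * ∑ t, ⟪w t, Φ (π t) - ΦE⟫ ≤
        sInf ((fun w' : EuclideanSpace ℝ (Fin k) =>
          (1 / (T : ℝ)) * ∑ t, ⟪w', Φ (π t) - ΦE⟫) '' W) + R)
    (Φψ : EuclideanSpace ℝ (Fin k))
    (hΦψ : Φψ = (1 / (T : ℝ)) • ∑ t, Φ (π t))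
    (fstar : ℝ)
    (hfstar : fstar = sSup ((fun ψ : P → ℝ =>
        sInf ((fun w' : EuclideanSpace ℝ (Fin k) =>
          ⟪w', (∑ p, ψ p • Φ p) - ΦE⟫) '' W)) '' stdSimplex ℝ P)) :
    fstar - R ≤ sInf ((fun w' : EuclideanSpace ℝ (Fin k) => ⟪w', Φψ - ΦE⟫) '' W) := by
  classical
  have hTpos : (0:ℝ) < T := Nat.cast_pos.mpr hT
  -- pointwise equality of the two objective functions
  have hfun : ∀ w' : EuclideanSpace ℝ (Fin k),
      (1 / (T : ℝ)) * ∑ t, ⟪w', Φ (π t) - ΦE⟫ = ⟪w', Φψ - ΦE⟫ := by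
    intro w'
    rw [hΦψ, inner_sub_right, real_inner_smul_right, inner_sum]
    simp only [inner_sub_right, Finset.sum_sub_distrib, Finset.sum_const,
      Finset.card_univ, Fintype.card_fin, nsmul_eq_mul]
    field_simp
  have himg : ((fun w' : EuclideanSpace ℝ (Fin k) =>
      (1 / (T : ℝ)) * ∑ t, ⟪w', Φ (π t) - ΦE⟫) '' W)
      = ((fun w' : EuclideanSpace ℝ (Fin k) => ⟪w', Φψ - ΦE⟫) '' W) :=
    Set.image_congr' hfun
  rw [himg] at hregret
  -- it suffices to bound fstar by the average payoff
  have hmain : fstar ≤ (1 / (T : ℝ)) * ∑ t, ⟪w t, Φ (π t) - ΦE⟫ := by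
    rw [hfstar]
    apply csSup_le
    · exact (Set.image_nonempty.mpr ⟨_, ite_eq_mem_stdSimplex ℝ (Classical.arbitrary P)⟩)
    · rintro x ⟨ψ, hψ, rfl⟩
      -- for each t, sInf ≤ ⟪w t, Φψ' - ΦE⟫ ≤ ⟪w t, Φ (π t) - ΦE⟫
      have hbdd : BddBelow ((fun w' : EuclideanSpace ℝ (Fin k) =>
          ⟪w', (∑ p, ψ p • Φ p) - ΦE⟫) '' W) := by
        have hc : Continuous (fun w' : EuclideanSpace ℝ (Fin k) =>
            ⟪w', (∑ p, ψ p • Φ p) - ΦE⟫) := continuous_id.inner continuous_const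
        exact (hWc.image hc).bddBelow
      have hterm : ∀ t : Fin T,
          sInf ((fun w' : EuclideanSpace ℝ (Fin k) =>
            ⟪w', (∑ p, ψ p • Φ p) - ΦE⟫) '' W) ≤ ⟪w t, Φ (π t) - ΦE⟫ := by
        intro t
        have h1 : sInf ((fun w' : EuclideanSpace ℝ (Fin k) =>
            ⟪w', (∑ p, ψ p • Φ p) - ΦE⟫) '' W) ≤ ⟪w t, (∑ p, ψ p • Φ p) - ΦE⟫ :=
          csInf_le hbdd ⟨w t, hw t, rfl⟩
        have h2 : ⟪w t, (∑ p, ψ p • Φ p)⟫ ≤ ⟪w t, Φ (π t)⟫ := by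
          rw [inner_sum]
          simp only [real_inner_smul_right]
          calc ∑ p, ψ p * ⟪w t, Φ p⟫ ≤ ∑ p, ψ p * ⟪w t, Φ (π t)⟫ := by
                apply Finset.sum_le_sum
                intro p _
                exact mul_le_mul_of_nonneg_left (hbest t p) (hψ.1 p)
            _ = ⟪w t, Φ (π t)⟫ := by
                rw [← Finset.sum_mul, hψ.2, one_mul]
        have h3 : ⟪w t, (∑ p, ψ p • Φ p) - ΦE⟫ ≤ ⟪w t, Φ (π t) - ΦE⟫ := by
          rw [inner_sub_right, inner_sub_right]
          linarith
        linarith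
      have hsum : (T : ℝ) * sInf ((fun w' : EuclideanSpace ℝ (Fin k) =>
          ⟪w', (∑ p, ψ p • Φ p) - ΦE⟫) '' W) ≤ ∑ t, ⟪w t, Φ (π t) - ΦE⟫ := by
        calc (T : ℝ) * _ = ∑ _t : Fin T, sInf ((fun w' : EuclideanSpace ℝ (Fin k) =>
              ⟪w', (∑ p, ψ p • Φ p) - ΦE⟫) '' W) := by
              rw [Finset.sum_const, Finset.card_univ, Fintype.card_fin, nsmul_eq_mul]
          _ ≤ _ := Finset.sum_le_sum (fun t _ => hterm t)
      dsimp only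
      have := mul_le_mul_of_nonneg_left hsum (le_of_lt (one_div_pos.mpr hTpos))
      calc sInf ((fun w' : EuclideanSpace ℝ (Fin k) =>
            ⟪w', (∑ p, ψ p • Φ p) - ΦE⟫) '' W)
          = (1 / (T : ℝ)) * ((T : ℝ) * sInf ((fun w' : EuclideanSpace ℝ (Fin k) =>
            ⟪w', (∑ p, ψ p • Φ p) - ΦE⟫) '' W)) := by field_simp
        _ ≤ (1 / (T : ℝ)) * ∑ t, ⟪w t, Φ (π t) - ΦE⟫ := this
  linarith
end
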